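/- Suppose reals u_1,…,u_K and strictly positive reals λ_1,…,λ_K satisfy the Afriat inequalities for the dataset {(α_t, β_t) : t = 1,…,K}, and let β̂_t = β_t + w_t for arbitrary vectors w_t ∈ ℝ^m. Then the same (u_t, λ_t) satisfy the relaxed Afriat inequalities for the noisy dataset {(α_t, β̂_t)} with slack ε = max_{i,j∈{1,…,K}} ⟨α_i, w_i − w_j⟩; consequently the statistic φ* of the noisy dataset satisfies φ* ≤ max_{i,j} ⟨α_i, w_i − w_j⟩. -/

import Mathlib

/-- Euclidean inner product on `Fin m → ℝ`. -/
noncomputable def ip {m : ℕ} (x y : Fin m → ℝ) : ℝ := ∑ i, x i * y i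

/-- The relaxed Afriat inequalities with slack `ε` for the noisy dataset
`{(α_t, β̂_t) : t = 0,…,K-1}` are feasible. -/
def RelaxedAfriatFeasible {m : ℕ} (K : ℕ) (α βh : ℕ → Fin m → ℝ) (ε : ℝ) : Prop :=
  ∃ uu lam : ℕ → ℝ, (∀ t < K, 0 < lam t) ∧
    ∀ s < K, ∀ t < K, uu s - uu t - lam t * ip (α t) (βh s - βh t) ≤ lam t * ε

/-- Suppose reals `u_1,…,u_K` and strictly positive reals `λ_1,…,λ_K`
satisfy the Afriat inequalities for the dataset `{(α_t, β_t)}`, and let `β̂_t = β_t + w_t`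
for arbitrary vectors `w_t ∈ ℝ^m`. Then the same `(u_t, λ_t)` satisfy the relaxed Afriat
inequalities for the noisy dataset with slack `ε = max_{i,j} ⟨α_i, w_i − w_j⟩`;
consequently the statistic `φ*` of the noisy dataset satisfies
`φ* ≤ max_{i,j} ⟨α_i, w_i − w_j⟩`. (Indices run over `0,…,K-1`; the pair `p` below is
`p = (i, j)`.) -/
theorem stmt_10 {m K : ℕ} (hK : 0 < K) (α β w : ℕ → Fin m → ℝ)
    (hα : ∀ t < K, ∀ i, 0 < α t i) (hβ : ∀ t < K, ∀ i, 0 ≤ β t i)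
    (uu lam : ℕ → ℝ) (hlam : ∀ t < K, 0 < lam t)
    (hAfriat : ∀ s < K, ∀ t < K, uu s - uu t - lam t * ip (α t) (β s - β t) ≤ 0)
    (βh : ℕ → Fin m → ℝ) (hβh : ∀ t, βh t = β t + w t)
    (ε : ℝ)
    (hε : ε = ((Finset.range K) ×ˢ (Finset.range K)).sup'
      ((Finset.nonempty_range_iff.mpr hK.ne').product (Finset.nonempty_range_iff.mpr hK.ne'))
      (fun p => ip (α p.1) (w p.1 - w p.2))) :
    (∀ s < K, ∀ t < K, uu s - uu t - lam t * ip (α t) (βh s - βh t) ≤ lam t * ε) ∧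
    sInf {ε' : ℝ | RelaxedAfriatFeasible K α βh ε'} ≤ ε := by
  have key : ∀ s < K, ∀ t < K,
      uu s - uu t - lam t * ip (α t) (βh s - βh t) ≤ lam t * ε := by
    intro s hs t ht
    have hsplit : ip (α t) (βh s - βh t)
        = ip (α t) (β s - β t) + ip (α t) (w s - w t) := by
      simp only [ip, hβh, ← Finset.sum_add_distrib]
      apply Finset.sum_congr rfl
      intro i _
      simp [Pi.add_apply, Pi.sub_apply]
      ring
    have hmem : (t, s) ∈ (Finset.range K) ×ˢ (Finset.range K) := by
      simp [Finset.mem_product, hs, ht]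
    have hle : ip (α t) (w t - w s) ≤ ε := by
      rw [hε]
      exact Finset.le_sup' (fun p => ip (α p.1) (w p.1 - w p.2)) hmem
    have hneg : -ip (α t) (w s - w t) = ip (α t) (w t - w s) := by
      simp [ip, ← Finset.sum_neg_distrib]
      apply Finset.sum_congr rfl
      intro i _; ring
    have h1 := hAfriat s hs t ht
    have hlamt := hlam t ht
    have h2 : lam t * ip (α t) (w t - w s) ≤ lam t * ε :=
      mul_le_mul_of_nonneg_left hle hlamt.le
    rw [hsplit]
    nlinarith [hneg, h1, h2]
  refine ⟨key, ?_⟩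
  have hε0 : 0 ≤ ε := by
    rw [hε]
    have hmem : ((0 : ℕ), (0 : ℕ)) ∈ (Finset.range K) ×ˢ (Finset.range K) := by
      simp [hK]
    have := Finset.le_sup' (f := fun p : ℕ × ℕ => ip (α p.1) (w p.1 - w p.2)) hmem
    refine le_trans ?_ this
    simp [ip]
  have hmemS : ε ∈ {ε' : ℝ | RelaxedAfriatFeasible K α βh ε'} :=
    ⟨uu, lam, hlam, key⟩
  by_cases hbdd : BddBelow {ε' : ℝ | RelaxedAfriatFeasible K α βh ε'}
  · exact csInf_le hbdd hmemS
  · rw [Real.sInf_of_not_bddBelow hbdd]; exact hε0
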